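/- Let K be a normal subgroup of a group G and suppose the quotient G/K is cyclic of order n, generated by the coset gK of an element g ∈ G (so gⁿ ∈ K). Let V be a complex vector space, ρ : K → GL(V) a group homomorphism, and T ∈ GL(V) satisfying T ρ(k) T⁻¹ = ρ(g k g⁻¹) for all k ∈ K and Tⁿ = ρ(gⁿ). Then there exists a unique group homomorphism ρ̃ : G → GL(V) such that ρ̃(k) = ρ(k) for all k ∈ K and ρ̃(g) = T. -/

import Mathlib

/-- For a normal subgroup `K ⊆ G` and `g ∈ G`, the homomorphism
`Int_g|_K : K → K`, `k ↦ g k g⁻¹`. -/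
def intK {G : Type*} [Group G] (K : Subgroup G) [K.Normal] (g : G) : ↥K →* ↥K :=
  (MulAut.conjNormal g).toMonoidHom

/-- If `G/K` is cyclic of order `n` generated by the coset `gK` (so `gⁿ ∈ K`),
`ρ : K → GL(V)` is a homomorphism and `T ∈ GL(V)` satisfies
`T ρ(k) T⁻¹ = ρ(g k g⁻¹)` for all `k ∈ K` and `Tⁿ = ρ(gⁿ)`, then there is a unique
homomorphism `ρ̃ : G → GL(V)` with `ρ̃|_K = ρ` and `ρ̃(g) = T`. -/
theorem statement9 {G : Type*} [Group G] (K : Subgroup G) [K.Normal]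
    {V : Type*} [AddCommGroup V] [Module ℂ V]
    (ρ : ↥K →* (V →ₗ[ℂ] V)ˣ) (g : G) (n : ℕ) (hn : 0 < n)
    (horder : orderOf ((g : G) : G ⧸ K) = n)
    (hgen : ∀ x : G ⧸ K, x ∈ Subgroup.zpowers ((g : G) : G ⧸ K))
    (hgn : g ^ n ∈ K)
    (T : (V →ₗ[ℂ] V)ˣ)
    (hT : ∀ k : ↥K, T * ρ k * T⁻¹ = ρ (intK K g k))
    (hTn : T ^ n = ρ ⟨g ^ n, hgn⟩) :
    ∃! ρt : G →* (V →ₗ[ℂ] V)ˣ, (∀ k : ↥K, ρt (k : G) = ρ k) ∧ ρt g = T := by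
  classical
  set N : G →* MulAut ↥K := MulAut.conjNormal with hNdef
  -- basic commutation relation
  have hT' : ∀ k : ↥K, T * ρ k = ρ (N g k) * T := by
    intro k
    have h := hT k
    calc T * ρ k = (T * ρ k * T⁻¹) * T := by group
    _ = ρ (N g k) * T := by rw [h]; rfl
  have hTinv : ∀ k : ↥K, T⁻¹ * ρ k = ρ (N g⁻¹ k) * T⁻¹ := by
    intro k
    have h2 : N g (N g⁻¹ k) = k := by
      rw [← MulAut.mul_apply, ← map_mul, mul_inv_cancel, map_one, MulAut.one_apply]
    have := hT' (N g⁻¹ k)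
    rw [h2] at this
    calc T⁻¹ * ρ k = T⁻¹ * (ρ k * T) * T⁻¹ := by group
    _ = T⁻¹ * (T * ρ (N g⁻¹ k)) * T⁻¹ := by rw [← this]
    _ = ρ (N g⁻¹ k) * T⁻¹ := by group
  have hA : ∀ (m : ℤ) (k : ↥K), T ^ m * ρ k = ρ (N (g ^ m) k) * T ^ m := by
    intro m
    induction m using Int.induction_on with
    | zero => intro k; simp
    | succ i ih =>
      intro k
      have e1 : T ^ ((i : ℤ) + 1) = T ^ (i : ℤ) * T := by rw [zpow_add_one]
      have e2 : N (g ^ ((i : ℤ) + 1)) k = N (g ^ (i : ℤ)) (N g k) := by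
        rw [zpow_add_one, map_mul, MulAut.mul_apply]
      rw [e1, e2, mul_assoc, hT' k, ← mul_assoc, ih (N g k), mul_assoc]
    | pred i ih =>
      intro k
      have e1 : T ^ (-(i : ℤ) - 1) = T ^ (-(i : ℤ)) * T⁻¹ := by
        rw [sub_eq_add_neg, zpow_add, zpow_neg_one]
      have e2 : N (g ^ (-(i : ℤ) - 1)) k = N (g ^ (-(i : ℤ))) (N g⁻¹ k) := by
        rw [sub_eq_add_neg, zpow_add, map_mul, MulAut.mul_apply, zpow_neg_one]
      rw [e1, e2, mul_assoc, hTinv k, ← mul_assoc, ih (N g⁻¹ k), mul_assoc]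
  have hA' : ∀ (m : ℤ) (k : ↥K), ρ k * T ^ m = T ^ m * ρ (N (g ^ (-m)) k) := by
    intro m k
    have h2 : N (g ^ m) (N (g ^ (-m)) k) = k := by
      rw [← MulAut.mul_apply, ← map_mul, ← zpow_add, add_neg_cancel, zpow_zero, map_one,
        MulAut.one_apply]
    conv_lhs => rw [← h2]
    rw [← hA]
  -- powers of T indexed by multiples of n
  have hTB : ∀ m : ℤ, T ^ ((n : ℤ) * m) = ρ ((⟨g ^ n, hgn⟩ : ↥K) ^ m) := by
    intro m
    rw [zpow_mul, zpow_natCast, hTn, ← map_zpow]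
  -- well-definedness
  have key : ∀ (x : G) (j j' : ℤ) (h : g ^ (-j) * x ∈ K) (h' : g ^ (-j') * x ∈ K),
      T ^ j * ρ ⟨g ^ (-j) * x, h⟩ = T ^ j' * ρ ⟨g ^ (-j') * x, h'⟩ := by
    intro x j j' h h'
    have hK : g ^ (j' - j) ∈ K := by
      have := K.mul_mem h (K.inv_mem h')
      have e : (g ^ (-j) * x) * (g ^ (-j') * x)⁻¹ = g ^ (j' - j) := by group
      rwa [e] at this
    have hq : ((g : G ⧸ K)) ^ (j' - j) = 1 := by
      rw [← QuotientGroup.mk_zpow, QuotientGroup.eq_one_iff]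
      exact hK
    have hdvd : ((n : ℤ)) ∣ j' - j := by
      rw [← horder]
      exact orderOf_dvd_iff_zpow_eq_one.mpr hq
    obtain ⟨m, hm⟩ := hdvd
    have hj' : j' = j + (n : ℤ) * m := by omega
    subst hj'
    have harg : (⟨g ^ n, hgn⟩ : ↥K) ^ m * ⟨g ^ (-(j + (n : ℤ) * m)) * x, h'⟩
        = (⟨g ^ (-j) * x, h⟩ : ↥K) := by
      ext
      push_cast
      rw [← zpow_natCast g n, ← zpow_mul]
      group
    symm
    calc T ^ (j + (n : ℤ) * m) * ρ ⟨g ^ (-(j + (n : ℤ) * m)) * x, h'⟩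
        = T ^ j * (T ^ ((n : ℤ) * m) * ρ ⟨g ^ (-(j + (n : ℤ) * m)) * x, h'⟩) := by
          rw [zpow_add, mul_assoc]
      _ = T ^ j * ρ ((⟨g ^ n, hgn⟩ : ↥K) ^ m * ⟨g ^ (-(j + (n : ℤ) * m)) * x, h'⟩) := by
          rw [hTB, ← map_mul]
      _ = T ^ j * ρ ⟨g ^ (-j) * x, h⟩ := by rw [harg]
  -- choice of exponents
  have hc : ∀ x : G, ∃ j : ℤ, g ^ (-j) * x ∈ K := by
    intro x
    obtain ⟨j, hj⟩ := hgen (x : G ⧸ K)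
    have hj' : ((g : G ⧸ K)) ^ j = (x : G ⧸ K) := hj
    refine ⟨j, ?_⟩
    rw [← QuotientGroup.eq_one_iff]
    rw [QuotientGroup.mk_mul, QuotientGroup.mk_zpow, ← hj']
    group
  choose c hcK using hc
  set f : G → (V →ₗ[ℂ] V)ˣ := fun x => T ^ (c x) * ρ ⟨g ^ (-(c x)) * x, hcK x⟩ with hfdef
  have hf : ∀ (x : G) (j : ℤ) (h : g ^ (-j) * x ∈ K), f x = T ^ j * ρ ⟨g ^ (-j) * x, h⟩ :=
    fun x j h => key x (c x) j (hcK x) h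
  have hmul : ∀ x y : G, f (x * y) = f x * f y := by
    intro x y
    have hconjmem : g ^ (-(c y)) * (g ^ (-(c x)) * x) * (g ^ (-(c y)))⁻¹ ∈ K :=
      Subgroup.Normal.conj_mem ‹K.Normal› _ (hcK x) _
    have hmem : g ^ (-(c x + c y)) * (x * y) ∈ K := by
      have h1 := K.mul_mem hconjmem (hcK y)
      have e : (g ^ (-(c y)) * (g ^ (-(c x)) * x) * (g ^ (-(c y)))⁻¹) * (g ^ (-(c y)) * y)
          = g ^ (-(c x + c y)) * (x * y) := by group
      rwa [e] at h1
    rw [hf (x * y) (c x + c y) hmem]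
    have harg : (⟨g ^ (-(c x + c y)) * (x * y), hmem⟩ : ↥K)
        = N (g ^ (-(c y))) ⟨g ^ (-(c x)) * x, hcK x⟩ * ⟨g ^ (-(c y)) * y, hcK y⟩ := by
      ext
      push_cast [hNdef, MulAut.conjNormal_apply]
      group
    calc T ^ (c x + c y) * ρ ⟨g ^ (-(c x + c y)) * (x * y), hmem⟩
        = T ^ (c x) * (T ^ (c y) * ρ (N (g ^ (-(c y))) ⟨g ^ (-(c x)) * x, hcK x⟩))
            * ρ ⟨g ^ (-(c y)) * y, hcK y⟩ := by
          rw [harg, map_mul, zpow_add]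
          group
      _ = T ^ (c x) * (ρ ⟨g ^ (-(c x)) * x, hcK x⟩ * T ^ (c y))
            * ρ ⟨g ^ (-(c y)) * y, hcK y⟩ := by rw [← hA']
      _ = f x * f y := by rw [hfdef]; group
  refine ⟨MonoidHom.mk' f hmul, ⟨?_, ?_⟩, ?_⟩
  · intro k
    have h0 : g ^ (-(0 : ℤ)) * (k : G) ∈ K := by simp [k.2]
    have : f (k : G) = T ^ (0 : ℤ) * ρ ⟨g ^ (-(0 : ℤ)) * (k : G), h0⟩ := hf _ 0 h0
    rw [show (MonoidHom.mk' f hmul) (k : G) = f (k : G) from rfl, this]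
    have harg : (⟨g ^ (-(0 : ℤ)) * (k : G), h0⟩ : ↥K) = k := by ext; simp
    rw [harg, zpow_zero, one_mul]
  · have h1 : g ^ (-(1 : ℤ)) * g ∈ K := by
      have : g ^ (-(1 : ℤ)) * g = 1 := by group
      rw [this]; exact K.one_mem
    have : f g = T ^ (1 : ℤ) * ρ ⟨g ^ (-(1 : ℤ)) * g, h1⟩ := hf _ 1 h1
    rw [show (MonoidHom.mk' f hmul) g = f g from rfl, this]
    have harg : (⟨g ^ (-(1 : ℤ)) * g, h1⟩ : ↥K) = 1 := by ext; push_cast; group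
    rw [harg, map_one, mul_one, zpow_one]
  · rintro ρ' ⟨h1, h2⟩
    refine MonoidHom.ext fun x => ?_
    show ρ' x = f x
    have hx : x = g ^ (c x) * (g ^ (-(c x)) * x) := by group
    calc ρ' x = ρ' (g ^ (c x)) * ρ' (g ^ (-(c x)) * x) := by rw [← map_mul, ← hx]
      _ = T ^ (c x) * ρ ⟨g ^ (-(c x)) * x, hcK x⟩ := by
          rw [map_zpow, h2, h1 ⟨g ^ (-(c x)) * x, hcK x⟩]
      _ = f x := rfl
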